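/- Let ν be a probability measure on ℝⁿ whose translates depend norm-continuously on the shift in total variation norm (i.e. ‖ν − ν(·−x)‖_TV → 0 as x → 0). Then ν is absolutely continuous with respect to Lebesgue measure. -/

import Mathlib

open MeasureTheory
open scoped ENNReal

/-- If the translates of a probability measure ν on ℝⁿ depend continuously on
the shift in total variation norm (uniformly over measurable sets), then ν is absolutely
continuous with respect to Lebesgue measure. -/
theorem absolutelyContinuous_of_tv_continuous_translates {n : ℕ}
    (ν : Measure (Fin n → ℝ)) [IsProbabilityMeasure ν]
    (hTV : ∀ ε : ℝ, 0 < ε → ∃ δ : ℝ, 0 < δ ∧ ∀ x : Fin n → ℝ, ‖x‖ < δ →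
      ∀ s : Set (Fin n → ℝ), MeasurableSet s →
        |(ν s).toReal - ((ν.map (fun y => y + x)) s).toReal| < ε) :
    ν ≪ (volume : Measure (Fin n → ℝ)) := by
  apply MeasureTheory.Measure.AbsolutelyContinuous.mk
  intro s hs hvol
  have hfin : ν s ≠ ⊤ := (measure_lt_top ν s).ne
  have key : ∀ ε : ℝ, 0 < ε → (ν s).toReal < ε := by
    intro ε hε
    obtain ⟨δ, hδ, hδ'⟩ := hTV ε hε
    have hadd : ∀ x : Fin n → ℝ, Measurable fun y : Fin n → ℝ => y + x := by
      intro x; fun_prop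
    obtain ⟨x, hx, hx0⟩ : ∃ x : Fin n → ℝ, ‖x‖ < δ ∧
        ν ((fun y => y + x) ⁻¹' s) = 0 := by
      have hmeas : Measurable fun p : (Fin n → ℝ) × (Fin n → ℝ) =>
          s.indicator (fun _ => (1 : ℝ≥0∞)) (p.2 + p.1) :=
        (measurable_const.indicator hs).comp (measurable_snd.add measurable_fst)
      have h1 : ∀ x : Fin n → ℝ, ν ((fun y => y + x) ⁻¹' s)
          = ∫⁻ y, s.indicator (fun _ => (1 : ℝ≥0∞)) (y + x) ∂ν := by
        intro x
        rw [← lintegral_indicator_one (hs.preimage (hadd x))]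
        exact lintegral_congr fun a => by
          by_cases h : a + x ∈ s <;> simp [Set.indicator_apply, h]
      have hf : Measurable fun x : Fin n → ℝ => ν ((fun y => y + x) ⁻¹' s) := by
        simp_rw [h1]
        exact Measurable.lintegral_prod_right hmeas
      have hzero : ∫⁻ x in Metric.ball (0 : Fin n → ℝ) δ,
          ν ((fun y => y + x) ⁻¹' s) ∂volume = 0 := by
        have hswap : ∫⁻ x in Metric.ball (0 : Fin n → ℝ) δ,
            (∫⁻ y, s.indicator (fun _ => (1 : ℝ≥0∞)) (y + x) ∂ν) ∂volume
            = ∫⁻ y, (∫⁻ x in Metric.ball (0 : Fin n → ℝ) δ,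
                s.indicator (fun _ => (1 : ℝ≥0∞)) (y + x) ∂volume) ∂ν :=
          lintegral_lintegral_swap hmeas.aemeasurable
        have hinner : ∀ y : Fin n → ℝ,
            (∫⁻ x in Metric.ball (0 : Fin n → ℝ) δ,
              s.indicator (fun _ => (1 : ℝ≥0∞)) (y + x) ∂volume) = 0 := by
          intro y
          have hle : (∫⁻ x in Metric.ball (0 : Fin n → ℝ) δ,
              s.indicator (fun _ => (1 : ℝ≥0∞)) (y + x) ∂volume)
              ≤ ∫⁻ x, s.indicator (fun _ => (1 : ℝ≥0∞)) (y + x) ∂volume :=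
            lintegral_mono' Measure.restrict_le_self le_rfl
          have heq : (∫⁻ x, s.indicator (fun _ => (1 : ℝ≥0∞)) (y + x) ∂volume)
              = volume ((fun x => y + x) ⁻¹' s) := by
            rw [← lintegral_indicator_one (hs.preimage (by fun_prop))]
            exact lintegral_congr fun a => by
              by_cases h : y + a ∈ s <;> simp [Set.indicator_apply, h]
          have htrans : volume ((fun x => y + x) ⁻¹' s) = volume s :=
            measure_preimage_add volume y s
          exact le_antisymm (by rw [heq, htrans, hvol] at hle; exact hle) zero_le
        simp_rw [h1, hswap, hinner]
        simp
      have haezero : ∀ᵐ x ∂(volume.restrict (Metric.ball (0 : Fin n → ℝ) δ)),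
          ν ((fun y => y + x) ⁻¹' s) = 0 :=
        (lintegral_eq_zero_iff hf).mp hzero
      have hballne : volume.restrict (Metric.ball (0 : Fin n → ℝ) δ) ≠ 0 := by
        rw [Ne, Measure.restrict_eq_zero]
        exact (Metric.measure_ball_pos volume 0 hδ).ne'
      haveI : (ae (volume.restrict (Metric.ball (0 : Fin n → ℝ) δ))).NeBot :=
        ae_neBot.mpr hballne
      have hmem : ∀ᵐ x ∂(volume.restrict (Metric.ball (0 : Fin n → ℝ) δ)),
          x ∈ Metric.ball (0 : Fin n → ℝ) δ := ae_restrict_mem Metric.isOpen_ball.measurableSet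
      obtain ⟨x, hxmem, hx0⟩ := (hmem.and haezero).exists
      refine ⟨x, ?_, hx0⟩
      simpa [Metric.mem_ball, dist_zero_right] using hxmem
    have := hδ' x hx s hs
    rw [Measure.map_apply (by fun_prop) hs, hx0] at this
    simpa using this
  have h0 : (ν s).toReal = 0 := by
    by_contra h
    have hpos : 0 < (ν s).toReal := lt_of_le_of_ne ENNReal.toReal_nonneg (Ne.symm h)
    exact absurd (key _ hpos) (lt_irrefl _)
  rcases (ENNReal.toReal_eq_zero_iff _).mp h0 with h | h
  · exact h
  · exact absurd h hfin
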